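/- Let 0→X→(ι) M→(π) Y→0 and 0→X'→(ι') M'→(π') Y'→0 be short exact sequences in mod A such that X and X' are indecomposable, Ext^1_A(M,X')=0, Ext^1_A(M',X)=0, ι is not a split monomorphism, and Y ≅ Y'. Then X ≅ X'. -/

import Mathlib

open CategoryTheory


lemma lift_of_ext (A : Type) [Ring A]
    (X' M' Y' : Type) [AddCommGroup X'] [Module A X'] [AddCommGroup M'] [Module A M']
    [AddCommGroup Y'] [Module A Y']
    (M : Type) [AddCommGroup M] [Module A M]
    (ι' : X' →ₗ[A] M') (π' : M' →ₗ[A] Y')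
    (hι' : Function.Injective ι')
    (hexact : Function.Exact ι' π')
    (hext : Limits.IsZero ((((_root_.Ext ℤ (ModuleCat.{0} A) 1).obj
      (Opposite.op (ModuleCat.of A M))).obj (ModuleCat.of A X'))))
    (hπ' : Function.Surjective π')
    (g : M →ₗ[A] Y') : ∃ u : M →ₗ[A] M', π'.comp u = g := by
  have P : ProjectiveResolution (ModuleCat.of A M) :=
    (HasProjectiveResolution.out (Z := ModuleCat.of A M)).some
  have h2 : (P.complex.linearYonedaObj ℤ (ModuleCat.of A X')).ExactAt 1 := by
    rw [HomologicalComplex.exactAt_iff_isZero_homology]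
    exact hext.of_iso (P.isoExt 1 (ModuleCat.of A X')).symm
  rw [HomologicalComplex.exactAt_iff' _ 0 1 2 (by simp) (by simp),
    ShortComplex.moduleCat_exact_iff] at h2
  set P0 := P.complex.X 0 with hP0
  set P1 := P.complex.X 1 with hP1
  set p0 : P0 ⟶ ModuleCat.of A M := P.π.f 0 with hp0
  have hp0epi : Function.Surjective p0 :=
    (ModuleCat.epi_iff_surjective p0).mp (Limits.epi_of_isColimit_cofork P.isColimitCokernelCofork)
  have hπ'epi : Epi (ModuleCat.ofHom π' : ModuleCat.of A M' ⟶ ModuleCat.of A Y') :=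
    (ModuleCat.epi_iff_surjective _).mpr hπ'
  set h0 : P0 ⟶ ModuleCat.of A M' :=
    Projective.factorThru (p0 ≫ ModuleCat.ofHom g) (ModuleCat.ofHom π') with hh0
  have hh0fac : h0 ≫ ModuleCat.ofHom π' = p0 ≫ ModuleCat.ofHom g :=
    Projective.factorThru_comp _ _
  set d10 : P1 ⟶ P0 := P.complex.d 1 0 with hd10
  have hd10π : ∀ x : P1, p0 (d10 x) = 0 := by
    intro x
    have h : d10 ≫ p0 = 0 := P.complex_d_comp_π_f_zero
    simpa using ConcreteCategory.congr_hom (h : (d10 ≫ p0 : P1 ⟶ ModuleCat.of A M) = 0) x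
  have hmem : ∀ x : P1, h0 (d10 x) ∈ LinearMap.range ι' := by
    intro x
    rw [← hexact.linearMap_ker_eq, LinearMap.mem_ker]
    have h := ConcreteCategory.congr_hom hh0fac (d10 x)
    simp only [ConcreteCategory.comp_apply, ModuleCat.ofHom_apply] at h
    show (ModuleCat.ofHom π') (h0 (d10 x)) = 0
    rw [h, hd10π x, map_zero]
  -- construct t : P1 ⟶ X'
  set e := LinearEquiv.ofInjective ι' hι' with he
  set t : P1 ⟶ ModuleCat.of A X' :=
    ModuleCat.ofHom ((e.symm.toLinearMap).comp
      (LinearMap.codRestrict (LinearMap.range ι') (h0.hom.comp d10.hom)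
        hmem)) with ht
  have hιt : ∀ x : P1, ι' (t x) = h0 (d10 x) := by
    intro x
    show ι' (e.symm _) = _
    have : ∀ y : LinearMap.range ι', ι' (e.symm y) = ↑y := by
      intro y
      conv_rhs => rw [← e.apply_symm_apply y]
      rw [he, LinearEquiv.ofInjective_apply]
    rw [this]
    rfl
  -- t is a cocycle
  have hcocycle : (P.complex.linearYonedaObj ℤ (ModuleCat.of A X')).d 1 2 t = 0 := by
    have hd : (P.complex.linearYonedaObj ℤ (ModuleCat.of A X')).d 1 2 t
        = (P.complex.d 2 1 ≫ t : P.complex.X 2 ⟶ ModuleCat.of A X') := by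
      rfl
    rw [hd]
    apply ConcreteCategory.hom_ext
    intro y
    apply hι'
    show ι' (t (P.complex.d 2 1 y)) = ι' 0
    rw [hιt, map_zero]
    have hdd : (P.complex.d 2 1 ≫ d10 : P.complex.X 2 ⟶ P0) = 0 :=
      P.complex.d_comp_d 2 1 0
    have : d10 (P.complex.d 2 1 y) = 0 := by simpa using ConcreteCategory.congr_hom hdd y
    rw [this]
    exact map_zero _
  obtain ⟨s₀, hs⟩ := h2 t hcocycle
  set s : P0 ⟶ ModuleCat.of A X' := s₀ with hseq
  have hs' : (d10 ≫ s : P1 ⟶ ModuleCat.of A X') = t := by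
    have hd : (P.complex.linearYonedaObj ℤ (ModuleCat.of A X')).d 0 1 s
        = (d10 ≫ s : P1 ⟶ ModuleCat.of A X') := by
      rfl
    rw [← hd]
    exact hs
  -- w : P0 ⟶ M'
  set sι : P0 ⟶ ModuleCat.of A M' := s ≫ ModuleCat.ofHom ι' with hsι
  set w : P0 ⟶ ModuleCat.of A M' := h0 - sι with hw
  have hwd : (d10 ≫ w : P1 ⟶ ModuleCat.of A M') = 0 := by
    apply ConcreteCategory.hom_ext
    intro x
    have h1 : w (d10 x) = h0 (d10 x) - sι (d10 x) := rfl
    have h2' : s (d10 x) = t x := ConcreteCategory.congr_hom hs' x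
    have h2'' : sι (d10 x) = ι' (s (d10 x)) := rfl
    show w (d10 x) = 0
    rw [h1, h2'', h2', hιt, sub_self]
  -- descend to u : M ⟶ M'
  set u : ModuleCat.of A M ⟶ ModuleCat.of A M' :=
    P.isColimitCokernelCofork.desc (Limits.CokernelCofork.ofπ w hwd) with hu
  have hfac : p0 ≫ u = w :=
    Limits.Cofork.IsColimit.π_desc P.isColimitCokernelCofork
  refine ⟨u.hom, ?_⟩
  apply LinearMap.ext
  intro m
  obtain ⟨x, rfl⟩ := hp0epi m
  have h3 : u (p0 x) = w x := ConcreteCategory.congr_hom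
    hfac x
  show π' (u (p0 x)) = g (p0 x)
  rw [h3]
  have h4 : π' (w x) = π' (h0 x) - π' (ι' (s x)) := map_sub π' _ _
  have h5 : π' (h0 x) = g (p0 x) := ConcreteCategory.congr_hom
    hh0fac x
  have h6 : π' (ι' (s x)) = 0 := by
    rw [hexact.apply_apply_eq_zero]
  show π' (w x) = g (p0 x)
  rw [h4, h5, h6, sub_zero]

lemma factor_exists (A : Type) [Ring A] (X X' M' : Type)
    [AddCommGroup X] [Module A X] [AddCommGroup X'] [Module A X']
    [AddCommGroup M'] [Module A M']
    (ι' : X' →ₗ[A] M') (hinj : Function.Injective ι')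
    (v : X →ₗ[A] M') (hmem : ∀ x, v x ∈ LinearMap.range ι') :
    ∃ f : X →ₗ[A] X', ∀ x, ι' (f x) = v x := by
  set e := LinearEquiv.ofInjective ι' hinj with he
  refine ⟨(e.symm.toLinearMap).comp (LinearMap.codRestrict (LinearMap.range ι') v hmem), ?_⟩
  intro x
  show ι' (e.symm _) = _
  have key : ∀ y : LinearMap.range ι', ι' (e.symm y) = ↑y := by
    intro y
    conv_rhs => rw [← e.apply_symm_apply y]
    rw [he, LinearEquiv.ofInjective_apply]
  rw [key]
  rfl


section Defs

variable (R : Type) [Ring R]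

/-- `M` belongs to `add T`: `M` is a direct summand of a finite direct power of `T`. -/
def InAdd (T M : Type) [AddCommGroup T] [Module R T] [AddCommGroup M] [Module R M] : Prop :=
  ∃ (n : ℕ) (ι : M →ₗ[R] (Fin n → T)) (ρ : (Fin n → T) →ₗ[R] M), ρ.comp ι = LinearMap.id

/-- `M` is indecomposable: it is nonzero and not the direct sum of two nonzero submodules. -/
def IsIndec (M : Type) [AddCommGroup M] [Module R M] : Prop :=
  Nontrivial M ∧ ∀ p q : Submodule R M, IsCompl p q → p = ⊥ ∨ q = ⊥

/-- `M` is basic: it is the direct sum of pairwise non-isomorphic indecomposable modules. -/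
def IsBasic (M : Type) [AddCommGroup M] [Module R M] : Prop :=
  ∃ (n : ℕ) (N : Fin n → Submodule R M), DirectSum.IsInternal N ∧
    (∀ i, IsIndec R (N i)) ∧ ∀ i j : Fin n, i ≠ j → IsEmpty ((N i) ≃ₗ[R] (N j))

/-- Vanishing of the `i`-th Ext group `Ext^i(X,Y)` between two modules. -/
def ExtVanish (i : ℕ) (X Y : ModuleCat.{0} R) : Prop :=
  Limits.IsZero ((((_root_.Ext ℤ (ModuleCat.{0} R) i).obj (Opposite.op X)).obj Y))

/-- Projective dimension at most `n`, defined recursively via syzygies. -/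
def pdLE {C : Type*} [Category C] [Abelian C] : ℕ → C → Prop
  | 0, M => Projective M
  | (n + 1), M => ∃ (P : C) (π : P ⟶ M), Epi π ∧ Projective P ∧ pdLE n (Limits.kernel π)

/-- Existence of a coresolution `0 → M → T¹ → ⋯ → Tʳ → 0` of length `≤ n`
with all `Tʲ` in `add T`. -/
def CoresLE (T : Type) [AddCommGroup T] [Module R T] : ℕ → ModuleCat.{0} R → Prop
  | 0, M => InAdd R T M
  | (n + 1), M => ∃ (X : ModuleCat.{0} R) (f : M ⟶ X),
      Mono f ∧ InAdd R T X ∧ CoresLE T n (Limits.cokernel f)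

/-- `T` is a tilting module: it lies in `mod R`, has finite projective dimension,
is selforthogonal, and `R` admits a finite coresolution by modules in `add T`. -/
def IsTilting (T : Type) [AddCommGroup T] [Module R T] : Prop :=
  Module.Finite R T ∧
  (∃ n, pdLE n (ModuleCat.of R T)) ∧
  (∀ i : ℕ, 1 ≤ i → ExtVanish R i (ModuleCat.of R T) (ModuleCat.of R T)) ∧
  (∃ r, CoresLE R T r (ModuleCat.of R R))

/-- A vertex of the Hasse quiver `K_R`: a basic tilting module. -/
def IsBasicTilting (M : ModuleCat.{0} R) : Prop :=
  IsBasic R M ∧ IsTilting R M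

/-- An arrow `M → N` in the Hasse quiver of basic tilting modules:
`M ≅ X ⊕ T̄`, `N ≅ Y ⊕ T̄` with `X`, `Y` indecomposable, and there is a non-split
short exact sequence `0 → X → E → Y → 0` with `E ∈ add T̄`. -/
def HasseArrow (M N : ModuleCat.{0} R) : Prop :=
  IsBasicTilting R M ∧ IsBasicTilting R N ∧
  ∃ X Y E Tbar : ModuleCat.{0} R,
    IsIndec R X ∧ IsIndec R Y ∧
    Nonempty (M ≃ₗ[R] (X × Tbar)) ∧ Nonempty (N ≃ₗ[R] (Y × Tbar)) ∧
    InAdd R Tbar E ∧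
    ∃ (ι : X →ₗ[R] E) (π : E →ₗ[R] Y),
      Function.Injective ι ∧ Function.Surjective π ∧ Function.Exact ι π ∧
      ¬ ∃ r : E →ₗ[R] X, r.comp ι = LinearMap.id

/-- There is an oriented path (possibly of length 0, and up to isomorphism)
from `M` to `N` in the Hasse quiver: `M` is a predecessor of `N`. -/
def HassePath (M N : ModuleCat.{0} R) : Prop :=
  Relation.ReflTransGen
    (fun (P Q : ModuleCat.{0} R) => Nonempty (↥P ≃ₗ[R] ↥Q) ∨ HasseArrow R P Q) M N

/-- `R` (as an algebra) is connected: its only central idempotents are `0` and `1`. -/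
def IsConnectedRing : Prop :=
  ∀ e : R, IsIdempotentElem e → (∀ a, a * e = e * a) → e = 0 ∨ e = 1

section Theta

variable (T : Type) [AddCommGroup T] [Module R T]

/-- The map `θ_{X,Y} : Hom_A(X,Y) → Hom_B(Hom_A(Y,T), Hom_A(X,T))`, `u ↦ Hom_A(u,T)`,
where `B = End_A(T)` acts on `Hom_A(-,T)` by composition. -/
def thetaMap (X Y : Type) [AddCommGroup X] [Module R X] [AddCommGroup Y] [Module R Y]
    (u : X →ₗ[R] Y) : (Y →ₗ[R] T) →ₗ[Module.End R T] (X →ₗ[R] T) where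
  toFun f := f.comp u
  map_add' _ _ := LinearMap.add_comp _ _ _
  map_smul' _ _ := rfl

/-- The evaluation map `X → Hom_B(Hom_A(X,T), T)`, `x ↦ (f ↦ f x)`,
as an `A`-linear map, where `B = End_A(T)`. -/
def evalMap (X : Type) [AddCommGroup X] [Module R X] :
    X →ₗ[R] ((X →ₗ[R] T) →ₗ[Module.End R T] T) where
  toFun x :=
    { toFun := fun f => f x
      map_add' := fun _ _ => rfl
      map_smul' := fun _ _ => rfl }
  map_add' x y := by ext f; exact f.map_add x y
  map_smul' a x := by ext f; exact f.map_smul a x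

end Theta

/-- Right multiplication by `x`, as an endomorphism of the left regular module. -/
def rightMulLin (x : R) : R →ₗ[R] R where
  toFun a := a * x
  map_add' a b := add_mul a b x
  map_smul' a b := by simp [smul_eq_mul, mul_assoc]

/-- `e` is a primitive idempotent. -/
def IsPrimitiveIdem (e : R) : Prop :=
  IsIdempotentElem e ∧ e ≠ 0 ∧
    ∀ f g : R, IsIdempotentElem f → IsIdempotentElem g → f * g = 0 → g * f = 0 →
      f + g = e → f = 0 ∨ g = 0

/-- `e 0, …, e (n-1)` is a complete set of pairwise orthogonal primitive idempotents. -/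
def IsCompleteOrthPrimIdems {n : ℕ} (e : Fin n → R) : Prop :=
  (∑ i, e i) = 1 ∧ (∀ i j : Fin n, i ≠ j → e i * e j = 0) ∧ ∀ i, IsPrimitiveIdem R (e i)

variable (k : Type) [Field k]

/-- The twisted module `N^ψ` (same underlying group, action `a * m = ψ a • m`) is
isomorphic to `N` as a module: there is an additive bijection `φ : N → N`
which is linear from `N^ψ` to `N`. -/
def TwistIso [Algebra k R] (ψ : R ≃ₐ[k] R) (N : Type) [AddCommGroup N] [Module R N] : Prop :=
  ∃ φ : N ≃+ N, ∀ (a : R) (m : N), φ (ψ a • m) = a • φ m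

/-- Condition `(H_{A,T})`: for every `k`-algebra automorphism `ψ` of `A` fixing each of the
idempotents `e i` and every direct summand `N` of `T`, one has `N^ψ ≅ N`. -/
def CondH [Algebra k R] {n : ℕ} (e : Fin n → R)
    (T : Type) [AddCommGroup T] [Module R T] : Prop :=
  ∀ ψ : R ≃ₐ[k] R, (∀ i, ψ (e i) = e i) →
    ∀ N : ModuleCat.{0} R,
      (∃ (ι : ↥N →ₗ[R] T) (ρ : T →ₗ[R] ↥N), ρ.comp ι = LinearMap.id) →
      TwistIso R k ψ ↥N

end Defs

/-- Let `0 → X →(ι) M →(π) Y → 0` and `0 → X' →(ι') M' →(π') Y' → 0` be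
short exact sequences in `mod A` with `X`, `X'` indecomposable, `Ext¹_A(M,X') = 0`,
`Ext¹_A(M',X) = 0`, `ι` not a split monomorphism, and `Y ≅ Y'`. Then `X ≅ X'`. -/
theorem stmt_13 (k : Type) [Field k] (A : Type) [Ring A] [Algebra k A] [FiniteDimensional k A]
    (X : Type) [AddCommGroup X] [Module A X] [Module.Finite A X]
    (M : Type) [AddCommGroup M] [Module A M] [Module.Finite A M]
    (Y : Type) [AddCommGroup Y] [Module A Y] [Module.Finite A Y]
    (X' : Type) [AddCommGroup X'] [Module A X'] [Module.Finite A X']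
    (M' : Type) [AddCommGroup M'] [Module A M'] [Module.Finite A M']
    (Y' : Type) [AddCommGroup Y'] [Module A Y'] [Module.Finite A Y']
    (ι : X →ₗ[A] M) (π : M →ₗ[A] Y) (ι' : X' →ₗ[A] M') (π' : M' →ₗ[A] Y')
    (hι : Function.Injective ι) (hπ : Function.Surjective π) (hιπ : Function.Exact ι π)
    (hι' : Function.Injective ι') (hπ' : Function.Surjective π')
    (hιπ' : Function.Exact ι' π')
    (hX : IsIndec A X) (hX' : IsIndec A X')
    (hext1 : ExtVanish A 1 (ModuleCat.of A M) (ModuleCat.of A X'))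
    (hext2 : ExtVanish A 1 (ModuleCat.of A M') (ModuleCat.of A X))
    (hns : ¬ ∃ r : M →ₗ[A] X, r.comp ι = LinearMap.id)
    (hYY' : Nonempty (Y ≃ₗ[A] Y')) :
    Nonempty (X ≃ₗ[A] X') := by
  classical
  obtain ⟨σ⟩ := hYY'
  -- Step 1: lifts u and u'
  obtain ⟨u, hu⟩ := lift_of_ext A X' M' Y' M ι' π' hι' hιπ' hext1 hπ'
    ((σ : Y →ₗ[A] Y').comp π)
  obtain ⟨u', hu'⟩ := lift_of_ext A X M Y M' ι π hι hιπ hext2 hπ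
    ((σ.symm : Y' →ₗ[A] Y).comp π')
  have hu_app : ∀ m : M, π' (u m) = σ (π m) := fun m => LinearMap.congr_fun hu m
  have hu'_app : ∀ m : M', π (u' m) = σ.symm (π' m) := fun m => LinearMap.congr_fun hu' m
  -- Step 2: induced maps f : X → X' and f' : X' → X
  have hkerπ' : LinearMap.ker π' = LinearMap.range ι' := hιπ'.linearMap_ker_eq
  have hkerπ : LinearMap.ker π = LinearMap.range ι := hιπ.linearMap_ker_eq
  obtain ⟨f, hf⟩ := factor_exists A X X' M' ι' hι' (u.comp ι) (by
    intro x
    rw [← hkerπ', LinearMap.mem_ker]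
    show π' (u (ι x)) = 0
    rw [hu_app, hιπ.apply_apply_eq_zero, map_zero])
  obtain ⟨f', hf'⟩ := factor_exists A X' X M ι hι (u'.comp ι') (by
    intro x'
    rw [← hkerπ, LinearMap.mem_ker]
    show π (u' (ι' x')) = 0
    rw [hu'_app, hιπ'.apply_apply_eq_zero, map_zero])
  -- Step 3: h : M → X with ι ∘ h = u' ∘ u - id
  obtain ⟨h, hh⟩ := factor_exists A M X M ι hι (u'.comp u - LinearMap.id) (by
    intro m
    rw [← hkerπ, LinearMap.mem_ker]
    have : π (u' (u m)) = π m := by rw [hu'_app, hu_app, σ.symm_apply_apply]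
    show π (u' (u m) - m) = 0
    rw [map_sub, this, sub_self])
  -- Step 4: f' ∘ f = id + h ∘ ι
  set g : Module.End A X := h.comp ι with hg
  have hEeq : ∀ x : X, f' (f x) = x + g x := by
    intro x
    apply hι
    rw [hf' (f x), map_add]
    show u' (ι' (f x)) = ι x + ι (g x)
    rw [hf x]
    have h1 : ι (h (ι x)) = u' (u (ι x)) - ι x := by
      have := congrArg (fun t => t) (hh (ι x))
      simpa using hh (ι x)
    show u' ((u.comp ι) x) = ι x + ι (g x)
    have h2 : ι (g x) = u' (u (ι x)) - ι x := h1
    rw [h2]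
    show u' (u (ι x)) = ι x + (u' (u (ι x)) - ι x)
    abel
  -- Step 5: module-theoretic finiteness instances
  haveI : IsNoetherianRing A := isNoetherian_of_tower k inferInstance
  haveI : IsArtinian k A := inferInstance
  haveI : IsArtinianRing A := isArtinian_of_tower k inferInstance
  haveI : IsNoetherian A X := inferInstance
  haveI : IsArtinian A X := inferInstance
  -- Step 6: Fitting's lemma for g
  obtain ⟨n, hcompl, hn1⟩ :=
    (g.eventually_isCompl_ker_pow_range_pow.and (Filter.eventually_ge_atTop 1)).exists
  have hcases := hX.2 _ _ hcompl
  have hgnil : IsNilpotent g := by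
    rcases hcases with hker | hrange
    · -- g is bijective: contradiction with non-splitness
      exfalso
      obtain ⟨m, rfl⟩ : ∃ m, n = m + 1 := ⟨n - 1, (Nat.succ_pred_eq_of_pos hn1).symm⟩
      have hinj : Function.Injective g := by
        rw [← LinearMap.ker_eq_bot]
        rw [eq_bot_iff, ← hker]
        intro x hx
        have hx' : g x = 0 := hx
        show x ∈ LinearMap.ker (g ^ (m + 1))
        rw [LinearMap.mem_ker]
        rw [pow_succ]
        show (g ^ m) (g x) = 0
        rw [hx', map_zero]
      have hrange_top : LinearMap.range (g ^ (m + 1)) = ⊤ := by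
        have := hcompl.sup_eq_top
        rwa [hker, bot_sup_eq] at this
      have hsurj : Function.Surjective g := by
        intro y
        have : y ∈ LinearMap.range (g ^ (m + 1)) := hrange_top ▸ Submodule.mem_top
        obtain ⟨x, hx⟩ := this
        refine ⟨(g ^ m) x, ?_⟩
        rw [← hx, pow_succ']
        rfl
      set geq := LinearEquiv.ofBijective g ⟨hinj, hsurj⟩ with hgeq
      refine hns ⟨geq.symm.toLinearMap.comp h, ?_⟩
      apply LinearMap.ext
      intro x
      show geq.symm (h (ι x)) = x
      have : h (ι x) = geq x := rfl
      rw [this, geq.symm_apply_apply]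
    · exact ⟨n, LinearMap.range_eq_bot.mp hrange⟩
  -- Step 7: E = f' ∘ f is a unit
  set E : Module.End A X := f'.comp f with hE
  have hEunit : IsUnit E := by
    have : E = g + 1 := by
      apply LinearMap.ext
      intro x
      show f' (f x) = g x + x
      rw [hEeq x, add_comm]
    rw [this]
    exact hgnil.isUnit_add_one
    -- Step 8: inverse of E
  set Einv : Module.End A X := (↑hEunit.unit⁻¹ : Module.End A X) with hEinvdef
  have hEinvE : ∀ x : X, Einv (E x) = x := by
    intro x
    have h1 : Einv * E = 1 := hEunit.val_inv_mul
    have := LinearMap.congr_fun h1 x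
    simpa using this
  have hEEinv : ∀ x : X, E (Einv x) = x := by
    intro x
    have h1 : E * Einv = 1 := hEunit.mul_val_inv
    have := LinearMap.congr_fun h1 x
    simpa using this
  -- Step 9: idempotent p on X'
  set p : Module.End A X' := f.comp (Einv.comp f') with hp
  have hpf : ∀ x : X, p (f x) = f x := by
    intro x
    show f (Einv (f' (f x))) = f x
    have : f' (f x) = E x := rfl
    rw [this, hEinvE]
  have hpp : ∀ z : X', p (p z) = p z := by
    intro z
    show f (Einv (f' (f (Einv (f' z))))) = p z
    have : f' (f (Einv (f' z))) = E (Einv (f' z)) := rfl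
    rw [this, hEEinv]
    rfl
  have hfinj : Function.Injective f := by
    intro a b hab
    have h1 : E a = E b := by
      show f' (f a) = f' (f b)
      rw [hab]
    have := congrArg Einv h1
    rwa [hEinvE, hEinvE] at this
  -- Step 10: IsCompl (range p) (ker p)
  have hcompl' : IsCompl (LinearMap.range p) (LinearMap.ker p) := by
    constructor
    · rw [disjoint_iff]
      apply le_antisymm _ bot_le
      intro z hz
      obtain ⟨hz1, hz2⟩ := Submodule.mem_inf.mp hz
      obtain ⟨y, rfl⟩ := hz1
      have hz2' : p (p y) = 0 := hz2
      rw [hpp] at hz2'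
      simpa using hz2'
    · rw [codisjoint_iff]
      apply le_antisymm le_top
      intro z _
      have : z = p z + (z - p z) := by abel
      rw [this]
      refine Submodule.add_mem_sup (LinearMap.mem_range_self p z) ?_
      rw [LinearMap.mem_ker, map_sub, hpp, sub_self]
  rcases hX'.2 _ _ hcompl' with hr | hk
  · -- range p = ⊥ impossible
    exfalso
    haveI := hX.1
    obtain ⟨x, hx⟩ := exists_ne (0 : X)
    have hmem : f x ∈ LinearMap.range p := ⟨f x, hpf x⟩
    rw [hr, Submodule.mem_bot] at hmem
    exact hx (hfinj (by rw [hmem, map_zero]))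
  · -- ker p = ⊥ : p = id, so f is an isomorphism
    have hpid : ∀ z : X', p z = z := by
      intro z
      have : z - p z ∈ LinearMap.ker p := by
        rw [LinearMap.mem_ker, map_sub, hpp, sub_self]
      rw [hk, Submodule.mem_bot, sub_eq_zero] at this
      exact this.symm
    refine ⟨LinearEquiv.ofLinear f (Einv.comp f') ?_ ?_⟩
    · apply LinearMap.ext
      intro z
      exact hpid z
    · apply LinearMap.ext
      intro x
      show Einv (f' (f x)) = x
      have : f' (f x) = E x := rfl
      rw [this, hEinvE]
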